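/- Under hypothesis (H1), F is superquadratic at infinity in the sense that u/√(F(u)) → 0 as u → ∞; moreover, for any sequence M_k → ∞, ∫₀¹ (1 − F(M_k s)/F(M_k))^{-1/2} ds → ∫₀¹ (1 − s^{p+1})^{-1/2} ds as k → ∞. -/

import Mathlib

open Real Set Filter MeasureTheory
open Topology
open scoped Interval

set_option maxHeartbeats 1600000 in
theorem stmt_18
    (f g g₁ : ℝ → ℝ) (p q : ℝ) (hp : 1 < p) (hq0 : 0 < q) (hq1 : q < 1)
    (hodd : ∀ u : ℝ, f (-u) = - f u)
    (hfloclip : ∀ x : ℝ, x ≠ 0 → ∃ ε > (0 : ℝ), ∃ L : NNReal, LipschitzOnWith L f (Metric.ball x ε))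
    (hH1 : ∀ u : ℝ, u ≠ 0 → f u = |u| ^ (p - 1) * u + g u)
    (hglim : ∀ ε : ℝ, 0 < ε → ∃ M : ℝ, 0 < M ∧ ∀ u : ℝ, M ≤ |u| → |g u / |u| ^ p| ≤ ε)
    (hH2 : ∀ u : ℝ, u ≠ 0 → f u = u / |u| ^ (q + 1) + g₁ u)
    (hg1lip : LocallyLipschitz g₁) (hg10 : g₁ 0 = 0)
    (hfpos : ∀ w : ℝ, 0 < w → 0 < f w)
    (F : ℝ → ℝ) (hF : ∀ u : ℝ, F u = ∫ s in (0 : ℝ)..u, f s)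
    :
    Tendsto (fun u => u / Real.sqrt (F u)) atTop (nhds 0) ∧
      ∀ M : ℕ → ℝ, Tendsto M atTop atTop →
        Tendsto (fun k => ∫ s in (0 : ℝ)..1, 1 / Real.sqrt (1 - F (M k * s) / F (M k)))
          atTop (nhds (∫ s in (0 : ℝ)..1, 1 / Real.sqrt (1 - s ^ (p + 1)))) := by
  have hp1 : (0:ℝ) < p + 1 := by linarith
  have hg1c : Continuous g₁ := hg1lip.continuous
  have hfint : ∀ a b : ℝ, IntervalIntegrable f volume a b := by
    have habs : ∀ a b : ℝ, IntervalIntegrable (fun x : ℝ => |x| ^ (-q)) volume a b := by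
      suffices h : ∀ c : ℝ, IntervalIntegrable (fun x : ℝ => |x| ^ (-q)) volume 0 c by
        intro a b; exact (h a).symm.trans (h b)
      have h0 : ∀ c : ℝ, 0 ≤ c → IntervalIntegrable (fun x : ℝ => |x| ^ (-q)) volume 0 c := by
        intro c hc
        have h1 : IntervalIntegrable (fun x : ℝ => x ^ (-q)) volume 0 c :=
          intervalIntegral.intervalIntegrable_rpow' (by linarith)
        rw [intervalIntegrable_iff, uIoc_of_le hc] at h1 ⊢
        refine h1.congr_fun (fun x hx => ?_) measurableSet_Ioc
        rw [abs_of_pos hx.1]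
      intro c
      rcases le_total 0 c with hc | hc
      · exact h0 c hc
      · rw [IntervalIntegrable.iff_comp_neg, neg_zero]
        simpa only [abs_neg] using h0 (-c) (by linarith)
    have hψ : ∀ a b : ℝ, IntervalIntegrable (fun x : ℝ => x * |x| ^ (-(q+1))) volume a b := by
      intro a b
      refine (habs a b).mono_fun ((by fun_prop : Measurable fun x : ℝ => x * |x| ^ (-(q+1))).aestronglyMeasurable)
        (Eventually.of_forall fun x => ?_)
      show ‖x * |x| ^ (-(q+1))‖ ≤ ‖|x| ^ (-q)‖
      rcases eq_or_ne x 0 with rfl | hx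
      · simp [Real.zero_rpow (by linarith : -q ≠ 0), Real.zero_rpow (by linarith : -(q+1) ≠ 0)]
      · have hx' : 0 < |x| := abs_pos.mpr hx
        have h1 : |x| * |x| ^ (-(q+1)) = |x| ^ (-q) := by
          nth_rewrite 1 [← Real.rpow_one |x|]
          rw [← Real.rpow_add hx']
          norm_num
        show ‖x * |x| ^ (-(q+1))‖ ≤ ‖|x| ^ (-q)‖
        rw [Real.norm_eq_abs, Real.norm_eq_abs, abs_mul, abs_of_nonneg (Real.rpow_nonneg (abs_nonneg x) _),
          abs_of_nonneg (Real.rpow_nonneg (abs_nonneg x) _), h1]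
    intro a b
    have hφ : IntervalIntegrable (fun x : ℝ => x * |x| ^ (-(q+1)) + g₁ x) volume a b :=
      (hψ a b).add (hg1c.intervalIntegrable a b)
    have hae : ∀ᵐ x : ℝ ∂volume, (fun x : ℝ => x * |x| ^ (-(q+1)) + g₁ x) x = f x := by
      have h0 : ∀ᵐ x : ℝ ∂volume, x ≠ 0 := by
        rw [ae_iff]
        simpa using measure_singleton (0 : ℝ)
      filter_upwards [h0] with x hx
      rw [hH2 x hx, Real.rpow_neg (abs_nonneg x), div_eq_mul_inv]
    exact ⟨hφ.1.congr (ae_restrict_of_ae hae), hφ.2.congr (ae_restrict_of_ae hae)⟩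
  have hfb : ∀ ε : ℝ, 0 < ε → ∃ M₁ : ℝ, 0 < M₁ ∧ ∀ u : ℝ, M₁ ≤ u → |f u - u ^ p| ≤ ε * u ^ p := by
    intro ε hε
    obtain ⟨M, hM, hMg⟩ := hglim ε hε
    refine ⟨M, hM, fun u hu => ?_⟩
    have hu0 : 0 < u := lt_of_lt_of_le hM hu
    have habs : |u| = u := abs_of_pos hu0
    have hupos : (0:ℝ) < u ^ p := Real.rpow_pos_of_pos hu0 p
    have hfu : f u = u ^ p + g u := by
      rw [hH1 u (ne_of_gt hu0), habs]
      congr 1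
      nth_rewrite 2 [← Real.rpow_one u]
      rw [← Real.rpow_add hu0]
      ring_nf
    have := hMg u (by rw [habs]; exact hu)
    rw [habs, abs_div, abs_of_pos hupos, div_le_iff₀ hupos] at this
    rw [hfu]
    simpa using this
  have Fdiff : ∀ a b : ℝ, F b - F a = ∫ s in a..b, f s := by
    intro a b
    rw [hF, hF, intervalIntegral.integral_interval_sub_left (hfint 0 b) (hfint 0 a)]
  have Fmono : ∀ a b : ℝ, 0 ≤ a → a ≤ b → F a ≤ F b := by
    intro a b ha hab
    rcases eq_or_lt_of_le hab with rfl | h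
    · exact le_refl _
    · have hpos := intervalIntegral.intervalIntegral_pos_of_pos_on (hfint a b)
        (fun x hx => hfpos x (lt_of_le_of_lt ha hx.1)) h
      have h2 := Fdiff a b
      linarith
  have Fpos : ∀ u : ℝ, 0 < u → 0 < F u := by
    intro u hu
    have hpos := intervalIntegral.intervalIntegral_pos_of_pos_on (hfint 0 u)
      (fun x hx => hfpos x hx.1) hu
    have h2 := Fdiff 0 u
    have h0 : F 0 = 0 := by rw [hF]; exact intervalIntegral.integral_same
    linarith
  have contF : Continuous F := by
    have h := intervalIntegral.continuous_primitive hfint 0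
    have hFeq : F = fun u => ∫ s in (0:ℝ)..u, f s := funext hF
    rw [hFeq]
    exact h
  have Flim : Tendsto (fun u => F u / u ^ (p+1)) atTop (𝓝 ((p+1)⁻¹)) := by
    rw [Metric.tendsto_atTop]
    intro ε hε
    obtain ⟨M₁, hM₁, hMb⟩ := hfb (min 1 (ε * (p+1) / 4)) (by positivity)
    set ε₁ := min 1 (ε * (p+1) / 4) with hε₁def
    have hε₁pos : 0 < ε₁ := by positivity
    set C := |F M₁ - M₁ ^ (p+1) / (p+1)| with hCdef
    have hC : 0 ≤ C := abs_nonneg _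
    -- find N
    obtain ⟨N₀, hN₀⟩ := (tendsto_rpow_atTop hp1).eventually_ge_atTop (4 * C / ε + 1) |>.exists_forall_of_atTop
    refine ⟨max N₀ (max M₁ 1), fun u hu => ?_⟩
    have huN₀ : N₀ ≤ u := le_trans (le_max_left _ _) hu
    have huM₁ : M₁ ≤ u := le_trans (le_trans (le_max_left _ _) (le_max_right _ _)) hu
    have hu1 : (1:ℝ) ≤ u := le_trans (le_trans (le_max_right _ _) (le_max_right _ _)) hu
    have hu0 : (0:ℝ) < u := by linarith
    have hX : (0:ℝ) < u ^ (p+1) := Real.rpow_pos_of_pos hu0 _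
    have hXge : 4 * C / ε + 1 ≤ u ^ (p+1) := hN₀ u huN₀
    -- the integral estimates
    have hrint : IntervalIntegrable (fun s : ℝ => s ^ p) volume M₁ u :=
      intervalIntegral.intervalIntegrable_rpow' (by linarith)
    have hrint2 : IntervalIntegrable (fun s : ℝ => ε₁ * s ^ p) volume M₁ u := hrint.const_mul ε₁
    have hP : (∫ s in M₁..u, s ^ p) = (u ^ (p+1) - M₁ ^ (p+1)) / (p+1) :=
      integral_rpow (Or.inl (by linarith))
    have hbd : ‖∫ s in M₁..u, (f s - s ^ p)‖ ≤ |∫ s in M₁..u, ε₁ * s ^ p| := by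
      refine intervalIntegral.norm_integral_le_abs_of_norm_le ?_ hrint2
      refine (ae_restrict_iff' measurableSet_uIoc).mpr (Eventually.of_forall fun t ht => ?_)
      rw [uIoc_of_le huM₁] at ht
      exact hMb t (le_of_lt ht.1)
    rw [intervalIntegral.integral_sub (hfint M₁ u) hrint, ← Fdiff, hP,
      intervalIntegral.integral_const_mul, hP] at hbd
    have hMple : M₁ ^ (p+1) ≤ u ^ (p+1) := Real.rpow_le_rpow (le_of_lt hM₁) huM₁ (le_of_lt hp1)
    have hMp0 : (0:ℝ) ≤ M₁ ^ (p+1) := Real.rpow_nonneg (le_of_lt hM₁) _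
    have habs2 : |ε₁ * ((u ^ (p+1) - M₁ ^ (p+1)) / (p+1))| ≤ ε₁ * u ^ (p+1) / (p+1) := by
      have h0 : (0:ℝ) ≤ ε₁ * ((u ^ (p+1) - M₁ ^ (p+1)) / (p+1)) := by
        apply mul_nonneg hε₁pos.le
        apply div_nonneg (by linarith) (by linarith)
      rw [abs_of_nonneg h0, mul_div_assoc]
      gcongr
      linarith
    rw [Real.norm_eq_abs] at hbd
    -- combine
    have hkey : |F u - u ^ (p+1) / (p+1)| ≤ C + ε₁ * u ^ (p+1) / (p+1) := by
      have h1 : F u - u ^ (p+1) / (p+1) =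
          (F M₁ - M₁ ^ (p+1) / (p+1)) + ((F u - F M₁) - (u ^ (p+1) - M₁ ^ (p+1)) / (p+1)) := by
        ring
      rw [h1]
      calc |(F M₁ - M₁ ^ (p+1) / (p+1)) + ((F u - F M₁) - (u ^ (p+1) - M₁ ^ (p+1)) / (p+1))|
          ≤ C + |(F u - F M₁) - (u ^ (p+1) - M₁ ^ (p+1)) / (p+1)| := by
            rw [hCdef]; exact abs_add_le _ _
        _ ≤ C + ε₁ * u ^ (p+1) / (p+1) := by
            have := le_trans hbd habs2
            linarith
    rw [Real.dist_eq]
    have hXinv : u ^ (p+1) / (p+1) / u ^ (p+1) = (p+1)⁻¹ := by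
      rw [div_div, mul_comm, ← div_div, div_self (ne_of_gt hX), one_div]
    have heq : F u / u ^ (p+1) - (p+1)⁻¹ = (F u - u ^ (p+1) / (p+1)) / u ^ (p+1) := by
      rw [sub_div, hXinv]
    rw [heq, abs_div, abs_of_pos hX]
    have h2 : |F u - u ^ (p+1) / (p+1)| / u ^ (p+1) ≤ (C + ε₁ * u ^ (p+1) / (p+1)) / u ^ (p+1) := by
      gcongr
    have h3 : (C + ε₁ * u ^ (p+1) / (p+1)) / u ^ (p+1) = C / u ^ (p+1) + ε₁ / (p+1) := by
      rw [add_div, mul_div_assoc, mul_div_assoc, hXinv, ← div_eq_mul_inv]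
    have h4 : C / u ^ (p+1) < ε / 2 := by
      rw [div_lt_iff₀ hX]
      have h5 : ε / 2 * (4 * C / ε + 1) ≤ ε / 2 * u ^ (p+1) := by gcongr
      have h6 : ε / 2 * (4 * C / ε) = 2 * C := by
        field_simp
        ring
      nlinarith
    have h7 : ε₁ / (p+1) ≤ ε / 4 := by
      calc ε₁ / (p+1) ≤ (ε * (p+1) / 4) / (p+1) := by
            gcongr
            exact min_le_right _ _
        _ = ε / 4 := by
            field_simp
    linarith
  have part1 : Tendsto (fun u => u / Real.sqrt (F u)) atTop (𝓝 0) := by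
    have hp1 : (0:ℝ) < p + 1 := by linarith
    have hne : ((p:ℝ)+1)⁻¹ ≠ 0 := by positivity
    have h1 : Tendsto (fun u : ℝ => u ^ (1-p)) atTop (𝓝 0) := by
      simpa only [neg_sub] using tendsto_rpow_neg_atTop (show (0:ℝ) < p - 1 by linarith)
    have h2 : Tendsto (fun u => u ^ (1-p) * (F u / u ^ (p+1))⁻¹) atTop (𝓝 0) := by
      simpa using h1.mul (Flim.inv₀ hne)
    have h3 : Tendsto (fun u => u ^ (2:ℝ) / F u) atTop (𝓝 0) := by
      refine h2.congr' ?_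
      filter_upwards [eventually_gt_atTop (0:ℝ)] with u hu
      have hX : (0:ℝ) < u ^ (p+1) := Real.rpow_pos_of_pos hu _
      have hF : F u ≠ 0 := ne_of_gt (Fpos u hu)
      rw [inv_div, ← mul_div_assoc, ← Real.rpow_add hu, show 1 - p + (p + 1) = (2:ℝ) by ring]
    have h4 : Tendsto (fun u => Real.sqrt (u ^ (2:ℝ) / F u)) atTop (𝓝 0) := by
      have := (Real.continuous_sqrt.tendsto 0).comp h3
      simpa [Function.comp_def] using this
    refine h4.congr' ?_
    filter_upwards [eventually_gt_atTop (0:ℝ)] with u hu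
    rw [Real.sqrt_div (Real.rpow_nonneg hu.le _), show u ^ (2:ℝ) = u ^ (2:ℕ) by
      rw [← Real.rpow_natCast]; norm_num, Real.sqrt_sq hu.le]
  refine ⟨part1, fun M hM => ?_⟩
  have hΙ : Ι (0:ℝ) 1 = Ioc (0:ℝ) 1 := uIoc_of_le zero_le_one
  obtain ⟨M₀, hM₀pos, hM₀⟩ := hfb (1/2) (by norm_num)
  have flow : ∀ u : ℝ, M₀ ≤ u → (1/2) * u ^ p ≤ f u := by
    intro u hu
    have := abs_le.1 (hM₀ u hu)
    linarith [this.1]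
  have fup : ∀ u : ℝ, M₀ ≤ u → f u ≤ (3/2) * u ^ p := by
    intro u hu
    have := abs_le.1 (hM₀ u hu)
    linarith [this.2]
  set Ms : ℝ := max (max (2*M₀) 1) (F M₀) with hMsdef
  have hMs1 : (1:ℝ) ≤ Ms := le_trans (le_max_right _ _) (le_max_left _ _)
  have hMs2M₀ : 2*M₀ ≤ Ms := le_trans (le_max_left _ _) (le_max_left _ _)
  have hMsF : F M₀ ≤ Ms := le_max_right _ _
  have intlow : ∀ a b : ℝ, M₀ ≤ a → a ≤ b → (1/2) * a ^ p * (b - a) ≤ F b - F a := by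
    intro a b ha hab
    have h0a : 0 < a := lt_of_lt_of_le hM₀pos ha
    have hmono := intervalIntegral.integral_mono_on hab
      (intervalIntegrable_const (c := (1/2) * a ^ p)) (hfint a b)
      (fun x hx => le_trans (by
        have h2 : a ^ p ≤ x ^ p := Real.rpow_le_rpow h0a.le hx.1 (by linarith)
        linarith) (flow x (le_trans ha hx.1)))
    rw [intervalIntegral.integral_const, Fdiff] at *
    rw [smul_eq_mul] at hmono
    linarith [hmono]
  have Fup : ∀ u : ℝ, Ms ≤ u → F u ≤ 2 * u ^ (p+1) := by
    intro u hu
    have hu1 : (1:ℝ) ≤ u := le_trans hMs1 hu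
    have hu0 : (0:ℝ) < u := by linarith
    have hM₀u : M₀ ≤ u := by linarith
    have hrint : IntervalIntegrable (fun s : ℝ => (3/2) * s ^ p) volume M₀ u :=
      (intervalIntegral.intervalIntegrable_rpow' (by linarith)).const_mul _
    have hmono := intervalIntegral.integral_mono_on hM₀u (hfint M₀ u) hrint
      (fun x hx => fup x hx.1)
    rw [intervalIntegral.integral_const_mul,
      integral_rpow (Or.inl (by linarith : (-1:ℝ) < p)), ← Fdiff] at hmono
    have hd0 : (0:ℝ) ≤ M₀ ^ (p+1) := Real.rpow_nonneg hM₀pos.le _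
    have hup : (3/2) * ((u ^ (p+1) - M₀ ^ (p+1)) / (p+1)) ≤ (3/4) * u ^ (p+1) := by
      have h1 : (u ^ (p+1) - M₀ ^ (p+1)) / (p+1) ≤ u ^ (p+1) / 2 :=
        div_le_div₀ (Real.rpow_nonneg hu0.le _) (by linarith) two_pos (by linarith)
      linarith
    have huu : u ≤ u ^ (p+1) := by
      nth_rewrite 1 [← Real.rpow_one u]
      exact Real.rpow_le_rpow_of_exponent_le hu1 (by linarith)
    have hFM₀ : F M₀ ≤ u ^ (p+1) := le_trans hMsF (le_trans hu huu)
    nlinarith [Real.rpow_pos_of_pos hu0 (p+1)]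
  set c₁ : ℝ := (1/2) * (1/2) ^ (p+1) with hc₁def
  have hc₁pos : 0 < c₁ := by
    have := Real.rpow_pos_of_pos (show (0:ℝ) < 1/2 by norm_num) (p+1)
    positivity
  have key : ∀ u t : ℝ, Ms ≤ u → 0 ≤ t → t ≤ 1 → c₁ * u ^ (p+1) * (1-t) ≤ F u - F (u*t) := by
    intro u t hu ht0 ht1
    have hu1 : (1:ℝ) ≤ u := le_trans hMs1 hu
    have hu0 : (0:ℝ) < u := by linarith
    have hM₀half : M₀ ≤ u/2 := by linarith [le_trans hMs2M₀ hu]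
    have hXpos : (0:ℝ) < u ^ (p+1) := Real.rpow_pos_of_pos hu0 _
    have hhalfpow : (u/2) ^ (p+1) = u ^ (p+1) * (1/2) ^ (p+1) := by
      rw [show u/2 = u * (1/2) by ring, Real.mul_rpow hu0.le (by norm_num)]
    have hhalfp : (u/2) ^ p = u ^ p * (1/2) ^ p := by
      rw [show u/2 = u * (1/2) by ring, Real.mul_rpow hu0.le (by norm_num)]
    have hupp1 : u ^ p * u = u ^ (p+1) := by
      nth_rewrite 2 [← Real.rpow_one u]
      rw [← Real.rpow_add hu0]
    rcases le_or_gt t (1/2) with ht | ht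
    · have hmid := intlow (u/2) u hM₀half (by linarith)
      have hmono2 : F (u*t) ≤ F (u/2) :=
        Fmono (u*t) (u/2) (mul_nonneg hu0.le ht0) (by nlinarith)
      have heq1 : (1/2) * (u/2) ^ p * (u - u/2) = (1/2) * (u/2) ^ (p+1) := by
        have : (u/2) ^ p * (u/2) = (u/2) ^ (p+1) := by
          nth_rewrite 2 [← Real.rpow_one (u/2)]
          rw [← Real.rpow_add (by linarith : (0:ℝ) < u/2)]
        rw [show u - u/2 = u/2 by ring, mul_assoc, this]
      have hge : (1/2) * (u/2) ^ (p+1) = c₁ * u ^ (p+1) := by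
        rw [hhalfpow, hc₁def]; ring
      have hc₁X : (0:ℝ) ≤ c₁ * u ^ (p+1) := by positivity
      have hh := mul_le_mul_of_nonneg_left (show (1:ℝ)-t ≤ 1 by linarith) hc₁X
      rw [mul_one] at hh
      linarith
    · have hut : M₀ ≤ u*t := by nlinarith
      have hlow := intlow (u*t) u hut (by nlinarith)
      have hpow2 : (u/2) ^ p ≤ (u*t) ^ p :=
        Real.rpow_le_rpow (by linarith) (by nlinarith) (by linarith)
      have h1t : (0:ℝ) ≤ 1 - t := by linarith
      have heq2 : (1/2) * (u/2) ^ p * (u - u*t) = (1/2) * (1/2) ^ p * (u ^ (p+1) * (1-t)) := by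
        rw [hhalfp, show u - u*t = u * (1-t) by ring, ← hupp1]; ring
      have hcle : c₁ ≤ (1/2) * (1/2) ^ p := by
        rw [hc₁def]
        have : ((1:ℝ)/2) ^ (p+1) ≤ (1/2) ^ p :=
          Real.rpow_le_rpow_of_exponent_ge (by norm_num) (by norm_num) (by linarith)
        linarith
      have hstep : (1/2) * (u/2) ^ p * (u - u*t) ≤ F u - F (u*t) := by
        have h3 : (0:ℝ) ≤ u - u*t := by nlinarith
        have hmul : (1/2) * (u/2) ^ p * (u - u*t) ≤ (1/2) * (u*t) ^ p * (u - u*t) :=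
          mul_le_mul_of_nonneg_right
            (mul_le_mul_of_nonneg_left hpow2 (by norm_num : (0:ℝ) ≤ 1/2)) h3
        linarith
      have hXt : (0:ℝ) ≤ u ^ (p+1) * (1-t) := mul_nonneg hXpos.le h1t
      calc c₁ * u ^ (p+1) * (1-t) = c₁ * (u ^ (p+1) * (1-t)) := by ring
        _ ≤ (1/2) * (1/2) ^ p * (u ^ (p+1) * (1-t)) := mul_le_mul_of_nonneg_right hcle hXt
        _ = (1/2) * (u/2) ^ p * (u - u*t) := heq2.symm
        _ ≤ F u - F (u*t) := hstep
  set κ : ℝ := c₁ / 2 with hκdef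
  have hκpos : 0 < κ := by positivity
  have keyratio : ∀ u t : ℝ, Ms ≤ u → 0 ≤ t → t ≤ 1 → κ * (1-t) ≤ 1 - F (u*t) / F u := by
    intro u t hu ht0 ht1
    have hu0 : (0:ℝ) < u := by linarith [hMs1, hu]
    have hFu : 0 < F u := Fpos u hu0
    have hXpos : (0:ℝ) < u ^ (p+1) := Real.rpow_pos_of_pos hu0 _
    have hk := key u t hu ht0 ht1
    have hf2 := Fup u hu
    have h1t : (0:ℝ) ≤ 1 - t := by linarith
    have h3 : κ * F u ≤ c₁ * u ^ (p+1) := by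
      rw [hκdef]
      nlinarith
    have h2 : F (u*t) / F u ≤ 1 - κ * (1-t) := by
      rw [div_le_iff₀ hFu]
      nlinarith [mul_le_mul_of_nonneg_left h3 h1t]
    linarith
  set B : ℝ := (Real.sqrt κ)⁻¹ with hBdef
  have hBpos : 0 < B := by
    rw [hBdef]
    exact inv_pos.mpr (Real.sqrt_pos.mpr hκpos)
  have hbound_int : IntervalIntegrable (fun t : ℝ => B * (1-t) ^ (-(1/2) : ℝ)) volume 0 1 := by
    have hri : IntervalIntegrable (fun x : ℝ => x ^ (-(1/2):ℝ)) volume 0 1 :=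
      intervalIntegral.intervalIntegrable_rpow' (by norm_num)
    have := (hri.comp_sub_left 1).symm
    norm_num at this
    exact this.const_mul B
  have hmeas : ∀ k, AEStronglyMeasurable (fun s : ℝ => 1 / Real.sqrt (1 - F (M k * s)/F (M k)))
      (volume.restrict (Ι (0:ℝ) 1)) := by
    intro k
    have hc : Continuous fun s : ℝ => Real.sqrt (1 - F (M k * s)/F (M k)) :=
      Real.continuous_sqrt.comp (continuous_const.sub ((contF.comp (continuous_mul_left (M k))).div_const _))
    exact ((measurable_const.div hc.measurable)).aestronglyMeasurable
  have hbd : ∀ᶠ k in atTop, ∀ᵐ s ∂(volume : Measure ℝ), s ∈ Ι (0:ℝ) 1 →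
      ‖1 / Real.sqrt (1 - F (M k * s)/F (M k))‖ ≤ B * (1-s) ^ (-(1/2):ℝ) := by
    filter_upwards [hM.eventually_ge_atTop Ms] with k hk
    refine Eventually.of_forall fun s hs => ?_
    rw [hΙ] at hs
    have hFm : 0 < F (M k) := Fpos _ (by linarith [hMs1])
    rcases eq_or_lt_of_le hs.2 with heq | hlt
    · subst heq
      rw [mul_one, div_self (ne_of_gt hFm), sub_self, Real.sqrt_zero, div_zero,
        norm_zero, Real.zero_rpow (by norm_num : (-(1/2):ℝ) ≠ 0), mul_zero]
    · have h1s : (0:ℝ) < 1 - s := by linarith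
      have hkr := keyratio (M k) s hk (le_of_lt hs.1) hs.2
      have hpos2 : (0:ℝ) < κ * (1-s) := mul_pos hκpos h1s
      have hs2 : 0 < Real.sqrt (κ * (1-s)) := Real.sqrt_pos.mpr hpos2
      have hle : Real.sqrt (κ * (1-s)) ≤ Real.sqrt (1 - F (M k * s)/F (M k)) :=
        Real.sqrt_le_sqrt hkr
      rw [Real.norm_eq_abs, abs_of_nonneg (by positivity)]
      calc 1 / Real.sqrt (1 - F (M k * s)/F (M k)) ≤ 1 / Real.sqrt (κ * (1-s)) :=
            one_div_le_one_div_of_le hs2 hle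
        _ = B * (1-s) ^ (-(1/2):ℝ) := by
            rw [Real.sqrt_mul hκpos.le, one_div, mul_inv, Real.rpow_neg h1s.le, hBdef]
            congr 1
            rw [Real.sqrt_eq_rpow]
  have hlim : ∀ᵐ s ∂(volume : Measure ℝ), s ∈ Ι (0:ℝ) 1 →
      Tendsto (fun k => 1 / Real.sqrt (1 - F (M k * s)/F (M k))) atTop
        (𝓝 (1 / Real.sqrt (1 - s ^ (p+1)))) := by
    refine Eventually.of_forall fun s hs => ?_
    rw [hΙ] at hs
    rcases eq_or_lt_of_le hs.2 with heq | hlt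
    · subst heq
      rw [Real.one_rpow, sub_self, Real.sqrt_zero, div_zero]
      refine Tendsto.congr' ?_ tendsto_const_nhds
      filter_upwards [hM.eventually_ge_atTop 1] with k hk
      rw [mul_one, div_self (ne_of_gt (Fpos _ (by linarith))), sub_self, Real.sqrt_zero, div_zero]
    · have hs0 : 0 < s := hs.1
      have hr : Tendsto (fun k => F (M k * s) / F (M k)) atTop (𝓝 (s ^ (p+1))) := by
        have hA : Tendsto (fun k => F (M k * s) / (M k * s) ^ (p+1)) atTop (𝓝 ((p+1)⁻¹)) :=
          Flim.comp (hM.atTop_mul_const hs0)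
        have hB2 : Tendsto (fun k => F (M k) / (M k) ^ (p+1)) atTop (𝓝 ((p+1)⁻¹)) :=
          Flim.comp hM
        have hprod := (hA.mul (hB2.inv₀ (by positivity))).mul_const (s ^ (p+1))
        rw [mul_inv_cancel₀ (by positivity), one_mul] at hprod
        refine hprod.congr' ?_
        filter_upwards [hM.eventually_ge_atTop 1] with k hk1
        have hmk : 0 < M k := by linarith
        have hFmk : F (M k) ≠ 0 := ne_of_gt (Fpos _ hmk)
        have hXk : (0:ℝ) < (M k) ^ (p+1) := Real.rpow_pos_of_pos hmk _
        have hsX : (0:ℝ) < s ^ (p+1) := Real.rpow_pos_of_pos hs0 _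
        have hsplit : (M k * s) ^ (p+1) = (M k) ^ (p+1) * s ^ (p+1) :=
          Real.mul_rpow hmk.le hs0.le
        rw [hsplit, inv_div]
        field_simp
      have h1s : 0 < 1 - s ^ (p+1) := by
        have : s ^ (p+1) < 1 := Real.rpow_lt_one hs0.le hlt hp1
        linarith
      have hc : Tendsto (fun k => Real.sqrt (1 - F (M k * s)/F (M k))) atTop
          (𝓝 (Real.sqrt (1 - s ^ (p+1)))) :=
        (Real.continuous_sqrt.tendsto _).comp (tendsto_const_nhds.sub hr)
      have := hc.inv₀ (ne_of_gt (Real.sqrt_pos.mpr h1s))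
      simpa [one_div] using this
  exact intervalIntegral.tendsto_integral_filter_of_dominated_convergence _
    (Eventually.of_forall hmeas) hbd hbound_int hlim
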